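/- Ambarzumian-type theorem for finite discrete graphs: if the Schrödinger operator L_c with potential c ≥ 0 has the same eigenvalues (with multiplicity) as the free Laplacian L_0, then c = 0. -/

import Mathlib

open Classical in
lemma complete_aux {X : Type*} [Fintype X] (m : X → ℝ) (hm : ∀ x, 0 < m x)
    (F : Fin (Fintype.card X) → X → ℝ)
    (horth : ∀ i j, (∑ x, F i x * F j x * m x) = if i = j then (1 : ℝ) else 0) :
    ∀ x y : X, (∑ n, F n x * F n y) = if x = y then 1 / m x else 0 := by
  classical
  set A : Matrix (Fin (Fintype.card X)) X ℝ :=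
    fun n x => F n x * Real.sqrt (m x) with hAdef
  set B : Matrix X (Fin (Fintype.card X)) ℝ :=
    fun x n => F n x * Real.sqrt (m x) with hBdef
  have hA : A * B = 1 := by
    ext i j
    have key : ∑ x, A i x * B x j = ∑ x, F i x * F j x * m x := by
      refine Finset.sum_congr rfl fun x _ => ?_
      have hs : Real.sqrt (m x) * Real.sqrt (m x) = m x :=
        Real.mul_self_sqrt (le_of_lt (hm x))
      simp only [hAdef, hBdef]
      calc F i x * Real.sqrt (m x) * (F j x * Real.sqrt (m x))
          = F i x * F j x * (Real.sqrt (m x) * Real.sqrt (m x)) := by ring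
        _ = F i x * F j x * m x := by rw [hs]
    simp [Matrix.mul_apply, key, horth i j, Matrix.one_apply]
  have hB : B * A = 1 :=
    (Matrix.mul_eq_one_comm_of_equiv (Fintype.equivFin X).symm).mp hA
  intro x y
  have hxy := congrFun (congrFun hB x) y
  have hsum : ∑ n, F n x * Real.sqrt (m x) * (F n y * Real.sqrt (m y))
      = if x = y then (1:ℝ) else 0 := by
    rw [Matrix.mul_apply, Matrix.one_apply] at hxy
    simpa [hAdef, hBdef] using hxy
  have hfac : ∑ n, F n x * Real.sqrt (m x) * (F n y * Real.sqrt (m y))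
      = (∑ n, F n x * F n y) * (Real.sqrt (m x) * Real.sqrt (m y)) := by
    rw [Finset.sum_mul]; exact Finset.sum_congr rfl fun n _ => by ring
  rw [hfac] at hsum
  have hsx : (0:ℝ) < Real.sqrt (m x) := Real.sqrt_pos.mpr (hm x)
  have hsy : (0:ℝ) < Real.sqrt (m y) := Real.sqrt_pos.mpr (hm y)
  by_cases h : x = y
  · subst h
    simp only [if_pos rfl] at hsum ⊢
    simp only [if_true] at hsum
    have hs : Real.sqrt (m x) * Real.sqrt (m x) = m x :=
      Real.mul_self_sqrt (le_of_lt (hm x))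
    rw [hs] at hsum
    rw [if_true, eq_div_iff (hm x).ne']
    exact hsum
  · simp only [if_neg h] at hsum ⊢
    have hne : Real.sqrt (m x) * Real.sqrt (m y) ≠ 0 := by positivity
    exact (mul_eq_zero.mp hsum).resolve_right hne

lemma trace_aux {X : Type*} [Fintype X] (m : X → ℝ) (b : X → X → ℝ) (c : X → ℝ)
    (hm : ∀ x, 0 < m x) (hbdiag : ∀ x, b x x = 0)
    (lam : Fin (Fintype.card X) → ℝ) (F : Fin (Fintype.card X) → X → ℝ)
    (horth : ∀ i j, (∑ x, F i x * F j x * m x) = if i = j then (1 : ℝ) else 0)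
    (heig : ∀ n x, (∑ y, b x y * (F n x - F n y)) / m x + (c x / m x) * F n x = lam n * F n x) :
    ∑ n, lam n = ∑ x, ((∑ y, b x y) + c x) / m x := by
  classical
  have hS := complete_aux m hm F horth
  have h1 : ∀ n, lam n = ∑ x, (lam n * F n x) * (F n x * m x) := by
    intro n
    have h := horth n n
    simp only [if_pos rfl, if_true] at h
    calc lam n = lam n * ∑ x, F n x * F n x * m x := by rw [h]; ring
    _ = ∑ x, (lam n * F n x) * (F n x * m x) := by
        rw [Finset.mul_sum]; exact Finset.sum_congr rfl fun x _ => by ring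
  calc ∑ n, lam n = ∑ n, ∑ x, (lam n * F n x) * (F n x * m x) :=
        Finset.sum_congr rfl fun n _ => h1 n
    _ = ∑ x, ∑ n, ((∑ y, b x y * (F n x - F n y)) * F n x + c x * (F n x * F n x)) := by
        rw [Finset.sum_comm]
        refine Finset.sum_congr rfl fun x _ => Finset.sum_congr rfl fun n _ => ?_
        rw [← heig n x]
        have hmx := (hm x).ne'
        field_simp
    _ = ∑ x, ((∑ y, b x y) + c x) / m x := by
        refine Finset.sum_congr rfl fun x _ => ?_
        have step1 : ∀ n : Fin (Fintype.card X),
            ((∑ y, b x y * (F n x - F n y)) * F n x + c x * (F n x * F n x))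
            = (∑ y, (b x y * (F n x * F n x) - b x y * (F n y * F n x)))
              + c x * (F n x * F n x) := by
          intro n
          congr 1
          rw [Finset.sum_mul]
          exact Finset.sum_congr rfl fun y _ => by ring
        rw [Finset.sum_congr rfl fun n _ => step1 n, Finset.sum_add_distrib, ← Finset.mul_sum]
        rw [Finset.sum_comm]
        have hxx : (∑ n, F n x * F n x) = 1 / m x := by simpa using hS x x
        have step2 : ∀ y : X,
            (∑ n, (b x y * (F n x * F n x) - b x y * (F n y * F n x))) = b x y / m x := by
          intro y
          rw [Finset.sum_sub_distrib, ← Finset.mul_sum, ← Finset.mul_sum, hxx]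
          by_cases h : y = x
          · subst h; simp [hbdiag]
          · have h0 : (∑ n, F n y * F n x) = 0 := by simpa [h] using hS y x
            rw [h0]; ring
        rw [Finset.sum_congr rfl fun y _ => step2 y, hxx, ← Finset.sum_div]
        field_simp

/-- Ambarzumian-type theorem for finite discrete graphs: if the Schrödinger
operator `L_c` with potential `c ≥ 0` has the same eigenvalues (with
multiplicity, in nondecreasing order) as the free Laplacian `L_0`, then `c = 0`. -/
theorem stmt_3 {X : Type*} [Fintype X] (m : X → ℝ) (b : X → X → ℝ) (c : X → ℝ) (hm : ∀ x : X, 0 < m x)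
    (hbsymm : ∀ x y : X, b x y = b y x) (hbnonneg : ∀ x y : X, (0 : ℝ) ≤ b x y)
    (hbdiag : ∀ x : X, b x x = 0) (hc : ∀ x : X, (0 : ℝ) ≤ c x)
    (lam0 lamc : Fin (Fintype.card X) → ℝ)
    (F0 Fc : Fin (Fintype.card X) → X → ℝ)
    (hmono0 : Monotone lam0) (hmonoc : Monotone lamc)
    (horth0 : ∀ i j, (∑ x, F0 i x * F0 j x * m x) = if i = j then (1 : ℝ) else 0)
    (horthc : ∀ i j, (∑ x, Fc i x * Fc j x * m x) = if i = j then (1 : ℝ) else 0)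
    (heig0 : ∀ n x, (∑ y, b x y * (F0 n x - F0 n y)) / m x = lam0 n * F0 n x)
    (heigc : ∀ n x,
      (∑ y, b x y * (Fc n x - Fc n y)) / m x + (c x / m x) * Fc n x = lamc n * Fc n x)
    (hiso : ∀ n, lamc n = lam0 n) :
    ∀ x, c x = 0 := by
  have heig0' : ∀ n x, (∑ y, b x y * (F0 n x - F0 n y)) / m x
      + ((fun _ : X => (0:ℝ)) x / m x) * F0 n x = lam0 n * F0 n x := by
    intro n x; simpa using heig0 n x
  have t0 := trace_aux m b (fun _ => 0) hm hbdiag lam0 F0 horth0 heig0'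
  have tc := trace_aux m b c hm hbdiag lamc Fc horthc heigc
  have hsum : ∑ n, lamc n = ∑ n, lam0 n := Finset.sum_congr rfl fun n _ => hiso n
  rw [tc, t0] at hsum
  have hdiff : ∑ x, c x / m x = 0 := by
    have expand : ∀ x : X, ((∑ y, b x y) + c x) / m x = (∑ y, b x y) / m x + c x / m x :=
      fun x => add_div _ _ _
    have expand0 : ∀ x : X, ((∑ y, b x y) + (fun _ : X => (0:ℝ)) x) / m x
        = (∑ y, b x y) / m x := by intro x; simp
    rw [Finset.sum_congr rfl fun x _ => expand x, Finset.sum_congr rfl fun x _ => expand0 x,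
      Finset.sum_add_distrib] at hsum
    linarith
  intro x
  have hnn : ∀ x ∈ Finset.univ, (0:ℝ) ≤ c x / m x := fun x _ =>
    div_nonneg (hc x) (le_of_lt (hm x))
  have h0 := (Finset.sum_eq_zero_iff_of_nonneg hnn).mp hdiff x (Finset.mem_univ x)
  have hmx := (hm x).ne'
  field_simp at h0
  simpa using h0
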